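/- ∫₀^π (1 − 2a·cos t + a² + c²)^{−1} dt = π / (√((1+a)²+c²)·√((1−a)²+c²)) for all real a, c with c ≠ 0 or |a| ≠ 1. -/

import Mathlib

open Real intervalIntegral

lemma key_integral (A B : ℝ) (hAB : |B| < A) :
    ∫ t in (0:ℝ)..π, (A - B * Real.cos t)⁻¹ = π / Real.sqrt (A^2 - B^2) := by
  have hA : 0 < A := lt_of_le_of_lt (abs_nonneg B) hAB
  have hABsq : 0 < A^2 - B^2 := by
    have := sq_lt_sq' (neg_lt_of_abs_lt hAB) (lt_of_abs_lt hAB)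
    nlinarith [this]
  set s := Real.sqrt (A^2 - B^2) with hs
  have hspos : 0 < s := Real.sqrt_pos.mpr hABsq
  have hssq : s^2 = A^2 - B^2 := Real.sq_sqrt hABsq.le
  have hden : ∀ t : ℝ, 0 < A - B * Real.cos t := by
    intro t
    have h1 : B * Real.cos t ≤ |B| := by
      calc B * Real.cos t ≤ |B * Real.cos t| := le_abs_self _
        _ = |B| * |Real.cos t| := abs_mul _ _
        _ ≤ |B| * 1 := by
            exact mul_le_mul_of_nonneg_left (Real.abs_cos_le_one t) (abs_nonneg B)
        _ = |B| := mul_one _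
    linarith
  have hD : ∀ t : ℝ, 0 < A + s - B * Real.cos t := by
    intro t; have := hden t; linarith
  set F : ℝ → ℝ := fun t => (t + 2 * Real.arctan (B * Real.sin t / (A + s - B * Real.cos t))) / s with hF
  have hderiv : ∀ t ∈ Set.uIcc (0:ℝ) π, HasDerivAt F ((A - B * Real.cos t)⁻¹) t := by
    intro t _
    have hDt := (hD t).ne'
    have hu : HasDerivAt (fun t => B * Real.sin t / (A + s - B * Real.cos t))
        ((B * Real.cos t * (A + s - B * Real.cos t) - B * Real.sin t * (B * Real.sin t)) /
          (A + s - B * Real.cos t)^2) t := by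
      have h1 : HasDerivAt (fun t => B * Real.sin t) (B * Real.cos t) t :=
        (Real.hasDerivAt_sin t).const_mul B
      have h2 : HasDerivAt (fun t => A + s - B * Real.cos t) (B * Real.sin t) t := by
        have := ((Real.hasDerivAt_cos t).const_mul B).const_sub (A + s)
        simpa using this
      exact h1.div h2 hDt
    have harc : HasDerivAt (fun t => Real.arctan (B * Real.sin t / (A + s - B * Real.cos t)))
        ((1 + (B * Real.sin t / (A + s - B * Real.cos t))^2)⁻¹ *
          ((B * Real.cos t * (A + s - B * Real.cos t) - B * Real.sin t * (B * Real.sin t)) /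
            (A + s - B * Real.cos t)^2)) t :=
      by have := (Real.hasDerivAt_arctan _).comp t hu; simp only [one_div] at this; exact this
    have hid : HasDerivAt (fun t : ℝ => t) 1 t := hasDerivAt_id t
    have hsum := (hid.add (harc.const_mul 2)).div_const s
    refine hsum.congr_deriv (Eq.symm ?_)
    have hc := Real.sin_sq_add_cos_sq t
    have hDne : (A + s - B * Real.cos t) ≠ 0 := hDt
    have hden' : (A - B * Real.cos t) ≠ 0 := (hden t).ne'
    have h1u : (1 + (B * Real.sin t / (A + s - B * Real.cos t))^2) ≠ 0 := by positivity
    field_simp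
    linear_combination (A + s - B*Real.cos t) * hssq +
      ((A + s - B*Real.cos t) * B^2) * hc
  have hcont : ContinuousOn (fun t => (A - B * Real.cos t)⁻¹) (Set.uIcc (0:ℝ) π) := by
    apply ContinuousOn.inv₀
    · exact (continuous_const.sub (continuous_const.mul Real.continuous_cos)).continuousOn
    · intro t _; exact (hden t).ne'
  have := intervalIntegral.integral_eq_sub_of_hasDerivAt hderiv
    (hcont.intervalIntegrable)
  rw [this]
  simp [hF, Real.sin_pi, Real.cos_pi, Real.sin_zero, Real.cos_zero, div_eq_div_iff hspos.ne' hspos.ne']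

theorem circle_distance_integral (a c : ℝ) (h : c ≠ 0 ∨ |a| ≠ 1) :
    ∫ t in (0:ℝ)..π, (1 - 2 * a * Real.cos t + a^2 + c^2)⁻¹
      = π / (Real.sqrt ((1+a)^2 + c^2) * Real.sqrt ((1-a)^2 + c^2)) := by
  have hAB : |2*a| < 1 + a^2 + c^2 := by
    have h1 : (1 - |a|)^2 + c^2 > 0 := by
      rcases h with hc | ha
      · positivity
      · have : (1 - |a|) ≠ 0 := by
          intro h0; apply ha; linarith
        positivity
    have h2 : |2*a| = 2 * |a| := by rw [abs_mul]; simp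
    have h3 : |a|^2 = a^2 := sq_abs a
    nlinarith [h1, h2, h3]
  have key := key_integral (1 + a^2 + c^2) (2*a) hAB
  have heq : (∫ t in (0:ℝ)..π, (1 - 2 * a * Real.cos t + a^2 + c^2)⁻¹)
      = ∫ t in (0:ℝ)..π, ((1 + a^2 + c^2) - (2*a) * Real.cos t)⁻¹ := by
    apply intervalIntegral.integral_congr
    intro t _; ring_nf
  rw [heq, key]
  congr 1
  rw [← Real.sqrt_mul (by positivity)]
  congr 1
  ring
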